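/- Let A be an m×n real matrix and b ∈ ℝᵐ, and suppose X = {x ∈ ℝⁿ : A x ≤ b} is nonempty. Let Ā = [A | −b] be the m×(n+1) matrix obtained by appending the column −b to A, and let ē = (0,…,0,1) ∈ ℝⁿ⁺¹. Then min_{x ∈ X} ½(‖x‖² + 1) = sup_{u ∈ ℝᵐ, u ≥ 0, θ ∈ ℝ} { θ − ½ ‖Āᵀ u − θ ē‖² }, and the supremum is attained. -/

import Mathlib

open scoped RealInnerProductSpace

open Finset Topology

lemma cone_carath {E : Type*} [AddCommGroup E] [Module ℝ E] {ι : Type*} [Fintype ι]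
    [DecidableEq ι] (v : ι → E) :
    ∀ (N : ℕ) (s : Finset ι) (u : ι → ℝ), s.card ≤ N → (∀ i, 0 ≤ u i) →
    ∃ (t : Finset ι) (w : ι → ℝ), t ⊆ s ∧ LinearIndependent ℝ (fun i : t => v i) ∧
      (∀ i, 0 ≤ w i) ∧ ∑ i ∈ t, w i • v i = ∑ i ∈ s, u i • v i := by
  intro N
  induction N with
  | zero =>
    intro s u hcard _
    have hs : s = ∅ := Finset.card_eq_zero.mp (Nat.le_zero.mp hcard)
    subst hs
    refine ⟨∅, 0, Finset.Subset.refl _, ?_, fun i => le_refl 0, by simp⟩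
    have : IsEmpty ((∅ : Finset ι) : Set ι) := by simp
    exact linearIndependent_empty_type
  | succ N ih =>
    intro s u hcard hu
    set s' := s.filter (fun i => u i ≠ 0) with hs'
    have hsub : s' ⊆ s := Finset.filter_subset _ _
    have hsum : ∑ i ∈ s', u i • v i = ∑ i ∈ s, u i • v i := by
      apply Finset.sum_filter_of_ne
      intro i _ h
      intro hui
      exact h (by rw [hui, zero_smul])
    by_cases hli : LinearIndependent ℝ (fun i : s' => v i)
    · exact ⟨s', u, hsub, hli, hu, hsum⟩
    · -- get a nontrivial relation
      obtain ⟨g, hg0, j, hgj⟩ := Fintype.not_linearIndependent_iff.mp hli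
      -- extend g to ι
      classical
      set c : ι → ℝ := fun i => if h : i ∈ s' then g ⟨i, h⟩ else 0 with hc
      have hcs : ∑ i ∈ s', c i • v i = 0 := by
        rw [← hg0, ← Finset.sum_attach s' (fun i => c i • v i)]
        apply Finset.sum_congr rfl
        intro i _
        simp [hc, i.2]
      have hcj : c (j : ι) ≠ 0 := by simpa [hc, j.2] using hgj
      -- WLOG some positive entry in s'
      have key : ∀ c : ι → ℝ, (∑ i ∈ s', c i • v i = 0) → (∃ i ∈ s', 0 < c i) →
          ∃ (t : Finset ι) (w : ι → ℝ), t ⊆ s ∧ LinearIndependent ℝ (fun i : t => v i) ∧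
            (∀ i, 0 ≤ w i) ∧ ∑ i ∈ t, w i • v i = ∑ i ∈ s, u i • v i := by
        intro c hcs hpos
        set P := s'.filter (fun i => 0 < c i) with hP
        have hPne : P.Nonempty := by
          obtain ⟨i, hi, hci⟩ := hpos
          exact ⟨i, Finset.mem_filter.mpr ⟨hi, hci⟩⟩
        obtain ⟨i₀, hi₀P, hi₀min⟩ := Finset.exists_min_image P (fun i => u i / c i) hPne
        have hi₀s' : i₀ ∈ s' := (Finset.mem_filter.mp hi₀P).1
        have hci₀ : 0 < c i₀ := (Finset.mem_filter.mp hi₀P).2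
        set r := u i₀ / c i₀ with hr
        have hr0 : 0 ≤ r := div_nonneg (hu i₀) hci₀.le
        set u' : ι → ℝ := fun i => if i ∈ s'.erase i₀ then u i - r * c i else 0 with hu'
        have hu'0 : ∀ i, 0 ≤ u' i := by
          intro i
          by_cases hi : i ∈ s'.erase i₀
          · have his' : i ∈ s' := Finset.mem_of_mem_erase hi
            simp only [hu', if_pos hi]
            rcases le_or_gt (c i) 0 with h | h
            · nlinarith [hu i]
            · have hiP : i ∈ P := Finset.mem_filter.mpr ⟨his', h⟩
              have h5 := hi₀min i hiP
              have h4 : r * c i ≤ u i := by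
                rw [div_le_div_iff₀ hci₀ h] at h5
                rw [hr, div_mul_eq_mul_div, div_le_iff₀ hci₀]
                linarith
              linarith
          · simp only [hu', if_neg hi]; exact le_refl 0
        have hu'sum : ∑ i ∈ s'.erase i₀, u' i • v i = ∑ i ∈ s, u i • v i := by
          have h1 : ∑ i ∈ s'.erase i₀, u' i • v i
              = ∑ i ∈ s'.erase i₀, (u i - r * c i) • v i := by
            apply Finset.sum_congr rfl
            intro i hi
            rw [hu']; simp [hi]
          have h2 : ∑ i ∈ s', (u i - r * c i) • v i
              = ∑ i ∈ s'.erase i₀, (u i - r * c i) • v i := by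
            rw [← Finset.add_sum_erase _ _ hi₀s']
            have : u i₀ - r * c i₀ = 0 := by
              rw [hr, div_mul_cancel₀ _ (ne_of_gt hci₀), sub_self]
            rw [this, zero_smul, zero_add]
          have h3 : ∑ i ∈ s', (u i - r * c i) • v i = ∑ i ∈ s', u i • v i := by
            simp only [sub_smul, Finset.sum_sub_distrib, mul_smul]
            rw [← Finset.smul_sum, hcs, smul_zero, sub_zero]
          rw [h1, ← h2, h3, hsum]
        have hcard' : (s'.erase i₀).card ≤ N := by
          have h1 : (s'.erase i₀).card < s'.card := Finset.card_erase_lt_of_mem hi₀s'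
          have h2 : s'.card ≤ s.card := Finset.card_le_card hsub
          omega
        obtain ⟨t, w, htsub, hli', hw0, hwsum⟩ := ih (s'.erase i₀) u' hcard' hu'0
        refine ⟨t, w, ?_, hli', hw0, by rw [hwsum, hu'sum]⟩
        exact htsub.trans ((Finset.erase_subset _ _).trans hsub)
      by_cases hpos : ∃ i ∈ s', 0 < c i
      · exact key c hcs hpos
      · apply key (-c)
        · simp only [Pi.neg_apply, neg_smul, Finset.sum_neg_distrib, hcs, neg_zero]
        · push_neg at hpos
          refine ⟨j, j.2, ?_⟩
          have := hpos j j.2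
          simp only [Pi.neg_apply]
          cases lt_or_eq_of_le this with
          | inl h => linarith
          | inr h => exact absurd h hcj

lemma cone_linIndep_closed {d : ℕ} {ι : Type*} [Fintype ι] [DecidableEq ι]
    (v : ι → EuclideanSpace ℝ (Fin d)) (t : Finset ι)
    (h : LinearIndependent ℝ (fun i : t => v i)) :
    IsClosed {x : EuclideanSpace ℝ (Fin d) |
      ∃ w : ι → ℝ, (∀ i, 0 ≤ w i) ∧ x = ∑ i ∈ t, w i • v i} := by
  classical
  set φ : (t → ℝ) →ₗ[ℝ] EuclideanSpace ℝ (Fin d) :=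
    (Fintype.linearCombination ℝ) (fun i : t => v i) with hφ
  have hφapp : ∀ w : t → ℝ, φ w = ∑ i : t, w i • v i := by
    intro w; simp [hφ, Fintype.linearCombination_apply]
  have hker : LinearMap.ker φ = ⊥ := by
    rw [LinearMap.ker_eq_bot']
    intro w hw
    rw [hφapp] at hw
    have := Fintype.linearIndependent_iff.mp h w hw
    funext i; exact this i
  have hce : IsClosedEmbedding φ := LinearMap.isClosedEmbedding_of_injective hker
  have hset : {x : EuclideanSpace ℝ (Fin d) |
      ∃ w : ι → ℝ, (∀ i, 0 ≤ w i) ∧ x = ∑ i ∈ t, w i • v i}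
      = φ '' {w : t → ℝ | ∀ i, 0 ≤ w i} := by
    ext x
    constructor
    · rintro ⟨w, hw0, rfl⟩
      refine ⟨fun i => w i, fun i => hw0 i, ?_⟩
      rw [hφapp, ← Finset.sum_coe_sort t (fun i => w i • v i)]
    · rintro ⟨w, hw0, rfl⟩
      refine ⟨fun i => if hi : i ∈ t then w ⟨i, hi⟩ else 0, ?_, ?_⟩
      · intro i
        by_cases hi : i ∈ t
        · simp only [dif_pos hi]; exact hw0 _
        · simp [dif_neg hi]
      · rw [hφapp, ← Finset.sum_coe_sort t
          (fun i => (if hi : i ∈ t then w ⟨i, hi⟩ else 0) • v i)]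
        apply Finset.sum_congr rfl
        intro i _
        simp [i.2]
  rw [hset]
  apply hce.isClosedMap
  have : {w : t → ℝ | ∀ i, 0 ≤ w i} = ⋂ i : t, (fun w : t → ℝ => w i) ⁻¹' Set.Ici 0 := by
    ext w; simp [Set.mem_iInter]
  rw [this]
  exact isClosed_iInter fun i => isClosed_Ici.preimage (continuous_apply i)

lemma cone_closed {d : ℕ} {ι : Type*} [Fintype ι] [DecidableEq ι]
    (v : ι → EuclideanSpace ℝ (Fin d)) (S : Finset ι) :
    IsClosed {x : EuclideanSpace ℝ (Fin d) |
      ∃ u : ι → ℝ, (∀ i, 0 ≤ u i) ∧ x = ∑ i ∈ S, u i • v i} := by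
  classical
  have hset : {x : EuclideanSpace ℝ (Fin d) |
      ∃ u : ι → ℝ, (∀ i, 0 ≤ u i) ∧ x = ∑ i ∈ S, u i • v i}
      = ⋃ t : {t : Finset ι // t ⊆ S ∧ LinearIndependent ℝ (fun i : t => v i)},
        {x | ∃ w : ι → ℝ, (∀ i, 0 ≤ w i) ∧ x = ∑ i ∈ (t : Finset ι), w i • v i} := by
    ext x
    simp only [Set.mem_setOf_eq, Set.mem_iUnion]
    constructor
    · rintro ⟨u, hu0, rfl⟩
      obtain ⟨t, w, hts, hli, hw0, hsum⟩ := cone_carath v S.card S u le_rfl hu0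
      exact ⟨⟨t, hts, hli⟩, w, hw0, hsum.symm⟩
    · rintro ⟨⟨t, hts, _⟩, w, hw0, rfl⟩
      refine ⟨fun i => if i ∈ t then w i else 0, ?_, ?_⟩
      · intro i
        by_cases hi : i ∈ t
        · simp only [if_pos hi]; exact hw0 i
        · simp [if_neg hi]
      · have h1 : ∀ x ∈ t, w x • v x = (if x ∈ t then w x else 0) • v x :=
          fun x hx => by rw [if_pos hx]
        rw [Finset.sum_congr rfl h1]
        exact Finset.sum_subset hts (fun x _ hxt => by rw [if_neg hxt, zero_smul])
  rw [hset]
  exact isClosed_iUnion_of_finite fun t =>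
    cone_linIndep_closed v t (t.2.2)

open scoped RealInnerProductSpace

lemma exists_kkt {m n : ℕ} (A : Matrix (Fin m) (Fin n) ℝ) (b : Fin m → ℝ)
    (xs : EuclideanSpace ℝ (Fin n)) (hfeas : A.mulVec xs ≤ b)
    (hmin : ∀ x : EuclideanSpace ℝ (Fin n), A.mulVec x ≤ b → ‖xs‖ ≤ ‖x‖) :
    ∃ u : Fin m → ℝ, (∀ i, 0 ≤ u i) ∧ (∀ i, A.mulVec xs i ≠ b i → u i = 0) ∧
      ∑ i, u i • ((WithLp.equiv 2 (Fin n → ℝ)).symm (A i)) = - xs := by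
  classical
  set rowE : Fin m → EuclideanSpace ℝ (Fin n) :=
    fun i => (WithLp.equiv 2 (Fin n → ℝ)).symm (A i) with hrowE
  have hinner_row : ∀ (i : Fin m) (y : EuclideanSpace ℝ (Fin n)),
      ⟪rowE i, y⟫ = A.mulVec y i := by
    intro i y
    simp [hrowE, PiLp.inner_apply, RCLike.inner_apply, Matrix.mulVec, dotProduct, mul_comm]
  set S : Finset (Fin m) := Finset.univ.filter (fun i => A.mulVec xs i = b i) with hS
  set C : Set (EuclideanSpace ℝ (Fin n)) :=
    {x | ∃ u : Fin m → ℝ, (∀ i, 0 ≤ u i) ∧ x = ∑ i ∈ S, u i • rowE i} with hC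
  have hCclosed : IsClosed C := cone_closed rowE S
  have hCne : C.Nonempty := ⟨0, 0, fun i => le_refl 0, by simp⟩
  set K : ConvexCone ℝ (EuclideanSpace ℝ (Fin n)) :=
    { carrier := C
      smul_mem' := by
        rintro c hc x ⟨u, hu0, rfl⟩
        exact ⟨fun i => c * u i, fun i => mul_nonneg hc.le (hu0 i), by
          rw [Finset.smul_sum]; apply Finset.sum_congr rfl; intro i _; rw [smul_smul]⟩
      add_mem' := by
        rintro x ⟨u, hu0, rfl⟩ y ⟨w, hw0, rfl⟩
        exact ⟨fun i => u i + w i, fun i => add_nonneg (hu0 i) (hw0 i), by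
          rw [← Finset.sum_add_distrib]; apply Finset.sum_congr rfl; intro i _;
          rw [add_smul]⟩ } with hK
  have hmem : -xs ∈ C := by
    by_contra hnot
    obtain ⟨y, hy1, hy2⟩ : ∃ y, (∀ x ∈ C, 0 ≤ ⟪x, y⟫) ∧ ⟪y, -xs⟫ < 0 := by
      obtain ⟨P, hP⟩ := ConvexCone.canLift.prf K ⟨hCne, hCclosed⟩
      have hPC : ∀ x, x ∈ P ↔ x ∈ C := fun x => by
        have := congrArg (fun K' : ConvexCone ℝ (EuclideanSpace ℝ (Fin n)) => x ∈ K') hP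
        exact Iff.of_eq this
      obtain ⟨y, h1, h2⟩ := ProperCone.hyperplane_separation' P (x₀ := -xs)
        (fun h => hnot ((hPC _).mp h))
      exact ⟨y, fun x hx => h1 x ((hPC x).mpr hx), by rw [real_inner_comm]; exact h2⟩
    -- rows in S have nonneg inner product with y
    have hrow : ∀ i ∈ S, 0 ≤ A.mulVec y i := by
      intro i hi
      rw [← hinner_row]
      apply hy1
      refine ⟨fun j => if j = i then 1 else 0, ?_, ?_⟩
      · intro j; by_cases h : j = i <;> simp [h]
      · symm
        rw [Finset.sum_eq_single i]
        · simp
        · intro j _ hj; simp [hj]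
        · intro h; exact absurd hi h
    have hxy : 0 < ⟪xs, y⟫ := by
      have : ⟪y, -xs⟫ = -⟪xs, y⟫ := by
        rw [inner_neg_right, real_inner_comm]
      linarith [hy2, this ▸ hy2]
    have hyne : y ≠ 0 := by
      intro h; rw [h, inner_zero_right] at hxy; linarith
    set g : Fin m → ℝ := fun i => A.mulVec y i with hg
    set B : Finset (Fin m) := Finset.univ.filter (fun i => g i < 0) with hB
    have hslack : ∀ i ∈ B, A.mulVec xs i < b i := by
      intro i hi
      rcases lt_or_eq_of_le (hfeas i) with h | h
      · exact h
      · exfalso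
        have hiS : i ∈ S := Finset.mem_filter.mpr ⟨Finset.mem_univ i, h⟩
        have := hrow i hiS
        have := (Finset.mem_filter.mp hi).2
        linarith
    set t₁ : ℝ := if hBne : B.Nonempty
      then B.inf' hBne (fun i => (b i - A.mulVec xs i) / (- g i)) else 1 with ht₁
    have ht₁pos : 0 < t₁ := by
      rw [ht₁]
      split_ifs with hBne
      · apply Finset.lt_inf'_iff hBne (f := fun i => (b i - A.mulVec xs i) / (- g i)) |>.mpr
        intro i hi
        have h1 := hslack i hi
        have h2 := (Finset.mem_filter.mp hi).2
        exact div_pos (by linarith) (by linarith)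
      · exact one_pos
    have ht₁le : ∀ i ∈ B, t₁ ≤ (b i - A.mulVec xs i) / (- g i) := by
      intro i hi
      rw [ht₁, dif_pos ⟨i, hi⟩]
      exact Finset.inf'_le _ hi
    set t₂ : ℝ := ⟪xs, y⟫ / ‖y‖ ^ 2 with ht₂
    have hy2pos : 0 < ‖y‖ ^ 2 := pow_pos (norm_pos_iff.mpr hyne) 2
    have ht₂pos : 0 < t₂ := div_pos hxy hy2pos
    set t : ℝ := min t₁ t₂ with ht
    have htpos : 0 < t := lt_min ht₁pos ht₂pos
    set x : EuclideanSpace ℝ (Fin n) := xs - t • y with hx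
    have hAx : ∀ i, A.mulVec x i = A.mulVec xs i - t * g i := by
      intro i
      simp [hx, hg, Matrix.mulVec, dotProduct, mul_sub, Finset.sum_sub_distrib,
        Finset.mul_sum, mul_left_comm]
    have hxfeas : A.mulVec x ≤ b := by
      intro i
      rw [hAx i]
      by_cases hi : g i < 0
      · have hiB : i ∈ B := Finset.mem_filter.mpr ⟨Finset.mem_univ i, hi⟩
        have h1 := ht₁le i hiB
        have h2 : t ≤ (b i - A.mulVec xs i) / (- g i) := le_trans (min_le_left _ _) h1
        rw [le_div_iff₀ (by linarith)] at h2
        nlinarith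
      · push_neg at hi
        have := hfeas i
        nlinarith
    have hnorm : ‖x‖ ^ 2 < ‖xs‖ ^ 2 := by
      have hexp : ‖x‖ ^ 2 = ‖xs‖ ^ 2 - 2 * t * ⟪xs, y⟫ + t ^ 2 * ‖y‖ ^ 2 := by
        rw [hx, norm_sub_sq_real, real_inner_smul_right, norm_smul]
        simp [mul_pow, abs_of_pos htpos]
        ring
      have ht2 : t * ‖y‖ ^ 2 ≤ ⟪xs, y⟫ := by
        have : t ≤ t₂ := min_le_right _ _
        rw [ht₂, le_div_iff₀ hy2pos] at this
        linarith
      nlinarith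
    have := hmin x hxfeas
    nlinarith [norm_nonneg x, norm_nonneg xs]
  obtain ⟨u, hu0, husum⟩ := hmem
  refine ⟨fun i => if i ∈ S then u i else 0, ?_, ?_, ?_⟩
  · intro i; by_cases h : i ∈ S <;> simp [h, hu0 i]
  · intro i hi
    have : i ∉ S := by
      rw [hS]; simp only [Finset.mem_filter, Finset.mem_univ, true_and]; exact hi
    simp [this]
  · show ∑ i : Fin m, (if i ∈ S then u i else 0) • rowE i = -xs
    rw [husum]
    symm
    have h1 : ∀ i ∈ S, u i • rowE i = (if i ∈ S then u i else 0) • rowE i :=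
      fun i hi => by rw [if_pos hi]
    rw [Finset.sum_congr rfl h1]
    exact Finset.sum_subset (Finset.subset_univ S)
      (fun i _ hiS => by rw [if_neg hiS, zero_smul])

lemma exists_min_norm {m n : ℕ} (A : Matrix (Fin m) (Fin n) ℝ) (b : Fin m → ℝ)
    (hne : {x : EuclideanSpace ℝ (Fin n) | A.mulVec x ≤ b}.Nonempty) :
    ∃ xs : EuclideanSpace ℝ (Fin n), A.mulVec xs ≤ b ∧
      ∀ x : EuclideanSpace ℝ (Fin n), A.mulVec x ≤ b → ‖xs‖ ≤ ‖x‖ := by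
  obtain ⟨x₀, hx₀⟩ := hne
  set X : Set (EuclideanSpace ℝ (Fin n)) := {x | A.mulVec x ≤ b} with hX
  have hXc : IsClosed X := by
    have hX2 : X = ⋂ i, {x : EuclideanSpace ℝ (Fin n) | A.mulVec x i ≤ b i} := by
      ext x; simp [hX, Pi.le_def, Set.mem_iInter]
    rw [hX2]
    refine isClosed_iInter fun i => isClosed_le ?_ continuous_const
    have : (fun x : EuclideanSpace ℝ (Fin n) => A.mulVec x i)
        = fun x : EuclideanSpace ℝ (Fin n) => ∑ j, A i j * x j := rfl
    rw [this]
    exact continuous_finset_sum _ fun j _ => continuous_const.mul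
      ((continuous_apply j).comp (PiLp.continuous_ofLp (p := 2) (β := fun _ : Fin n => ℝ)))
  set K : Set (EuclideanSpace ℝ (Fin n)) := X ∩ Metric.closedBall 0 ‖x₀‖ with hKdef
  have hKc : IsCompact K := (isCompact_closedBall _ _).inter_left hXc
  have hx₀K : x₀ ∈ K := ⟨hx₀, by simp [Metric.mem_closedBall]⟩
  obtain ⟨xs, hxsK, hxsmin⟩ := hKc.exists_isMinOn ⟨x₀, hx₀K⟩ continuous_norm.continuousOn
  refine ⟨xs, hxsK.1, ?_⟩
  intro x hx
  rcases le_or_gt ‖x‖ ‖x₀‖ with h | h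
  · exact hxsmin ⟨hx, by simpa [Metric.mem_closedBall] using h⟩
  · exact le_trans (hxsmin hx₀K) h.le



/-- With `X = {x : A x ≤ b}` nonempty, `Ā = [A | −b]` and `ē = (0,…,0,1)`,
`min_{x ∈ X} ½(‖x‖² + 1) = sup_{u ≥ 0, θ} { θ − ½‖Āᵀu − θē‖² }` and the supremum is
attained (stated: some value `v` is simultaneously the least value of the left-hand side
set and the greatest value of the right-hand side set). -/
theorem least_norm_dual_sup
    (m n : ℕ) (A : Matrix (Fin m) (Fin n) ℝ) (b : Fin m → ℝ)
    (hne : {x : EuclideanSpace ℝ (Fin n) | A.mulVec x ≤ b}.Nonempty)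
    (Abar : Matrix (Fin m) (Fin (n + 1)) ℝ)
    (hAbar : Abar = Matrix.of fun i => Fin.snoc (A i) (-(b i)))
    (ebar : EuclideanSpace ℝ (Fin (n + 1)))
    (hebar : ebar = EuclideanSpace.single (Fin.last n) 1) :
    ∃ v : ℝ,
      IsLeast {w : ℝ | ∃ x : EuclideanSpace ℝ (Fin n),
          A.mulVec x ≤ b ∧ w = (1 / 2) * (‖x‖ ^ 2 + 1)} v ∧
      IsGreatest {w : ℝ | ∃ (u : Fin m → ℝ) (θ : ℝ), 0 ≤ u ∧
          w = θ - (1 / 2) * ‖(WithLp.equiv 2 (Fin (n + 1) → ℝ)).symm (Abar.transpose.mulVec u) - θ • ebar‖ ^ 2} v := by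
  classical
  obtain ⟨xs, hfeas, hmin⟩ := exists_min_norm A b hne
  obtain ⟨us, hus0, huscs, hussum⟩ := exists_kkt A b xs hfeas hmin
  set v : ℝ := (1 / 2) * (‖xs‖ ^ 2 + 1) with hv
  -- the lifted point (xs, 1)
  set xbar : EuclideanSpace ℝ (Fin (n + 1)) :=
    (WithLp.equiv 2 (Fin (n + 1) → ℝ)).symm
      (Fin.snoc (WithLp.equiv 2 (Fin n → ℝ) xs) 1) with hxbar
  have hxbar_cast : ∀ j : Fin n, xbar j.castSucc = xs j := by
    intro j; simp [hxbar]
  have hxbar_last : xbar (Fin.last n) = 1 := by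
    simp [hxbar]
  have hAbar_cast : ∀ (i : Fin m) (j : Fin n), Abar i j.castSucc = A i j := by
    intro i j; simp [hAbar]
  have hAbar_last : ∀ i : Fin m, Abar i (Fin.last n) = -(b i) := by
    intro i; simp [hAbar]
  have hebar_cast : ∀ j : Fin n, ebar j.castSucc = 0 := by
    intro j
    rw [hebar, EuclideanSpace.single_apply]
    simp [Fin.castSucc_lt_last j, ne_of_lt]
  have hebar_last : ebar (Fin.last n) = 1 := by
    rw [hebar, EuclideanSpace.single_apply]; simp
  have hnormxbar : ‖xbar‖ ^ 2 = ‖xs‖ ^ 2 + 1 := by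
    rw [← real_inner_self_eq_norm_sq, ← real_inner_self_eq_norm_sq]
    simp only [PiLp.inner_apply, RCLike.inner_apply, conj_trivial]
    rw [Fin.sum_univ_castSucc]
    simp [hxbar_cast, hxbar_last]
  have happ0 : ∀ (u : Fin m → ℝ) (θ : ℝ) (j : Fin (n + 1)),
      ((WithLp.equiv 2 (Fin (n + 1) → ℝ)).symm (Abar.transpose.mulVec u) - θ • ebar) j
        = (∑ i, Abar i j * u i) - θ * ebar j := by
    intro u θ j
    simp [Matrix.mulVec, dotProduct, Matrix.transpose_apply]
  -- key inner product computation
  have hinner : ∀ (u : Fin m → ℝ) (θ : ℝ),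
      ⟪(WithLp.equiv 2 (Fin (n + 1) → ℝ)).symm (Abar.transpose.mulVec u) - θ • ebar, xbar⟫
        = (∑ i, u i * (A.mulVec xs i - b i)) - θ := by
    intro u θ
    simp only [PiLp.inner_apply, RCLike.inner_apply, conj_trivial]
    have happ := happ0 u θ
    rw [Fin.sum_univ_castSucc]
    simp only [happ, hxbar_cast, hxbar_last, hebar_cast, hebar_last]
    have hc : ∀ j : Fin n, xs j * ((∑ i, Abar i j.castSucc * u i) - θ * 0)
        = ∑ i, u i * (A i j * xs j) := by
      intro j
      rw [mul_zero, sub_zero, Finset.mul_sum]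
      apply Finset.sum_congr rfl
      intro i _
      rw [hAbar_cast]; ring
    rw [Finset.sum_congr rfl (fun j _ => hc j)]
    rw [Finset.sum_comm]
    have hl : (∑ i, Abar i (Fin.last n) * u i) - θ * 1
        = (∑ i, -(b i) * u i) - θ := by
      rw [mul_one]
      congr 1
      exact Finset.sum_congr rfl fun i _ => by rw [hAbar_last]
    rw [hl]
    have : ∀ i : Fin m, ∑ j, u i * (A i j * xs j) = u i * A.mulVec xs i := by
      intro i
      rw [← Finset.mul_sum]
      rfl
    rw [Finset.sum_congr rfl (fun i _ => this i)]
    have hfin : ∑ i, u i * (A.mulVec xs i - b i)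
        = ∑ i, u i * A.mulVec xs i + ∑ i, -b i * u i := by
      rw [← Finset.sum_add_distrib]
      exact Finset.sum_congr rfl fun i _ => by ring
    rw [one_mul, hfin]
    ring
  -- weak duality
  have hwd : ∀ (u : Fin m → ℝ) (θ : ℝ), (∀ i, 0 ≤ u i) →
      θ - (1/2) * ‖(WithLp.equiv 2 (Fin (n + 1) → ℝ)).symm (Abar.transpose.mulVec u)
        - θ • ebar‖ ^ 2 ≤ v := by
    intro u θ hu
    set W := (WithLp.equiv 2 (Fin (n + 1) → ℝ)).symm (Abar.transpose.mulVec u) - θ • ebar with hW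
    have h1 : ⟪W, xbar⟫ ≤ -θ := by
      rw [hW, hinner u θ]
      have : ∑ i, u i * (A.mulVec xs i - b i) ≤ 0 :=
        Finset.sum_nonpos fun i _ =>
          mul_nonpos_of_nonneg_of_nonpos (hu i) (by linarith [hfeas i])
      linarith
    have h2 : (0:ℝ) ≤ ‖W + xbar‖ ^ 2 := sq_nonneg _
    rw [norm_add_sq_real] at h2
    rw [hv]
    linarith [hnormxbar ▸ h2]
  -- strong duality witness
  set θs : ℝ := 1 + ‖xs‖ ^ 2 with hθs
  have hrows : ∀ j : Fin n, ∑ i, us i * A i j = -(xs j) := by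
    intro j
    have h := congrArg (fun z : EuclideanSpace ℝ (Fin n) => z j) hussum
    beta_reduce at h
    have hL : (∑ i, us i • (WithLp.equiv 2 (Fin n → ℝ)).symm (A i)) j
        = ∑ i, us i * A i j := by
      rw [WithLp.ofLp_sum, Finset.sum_apply]
      rfl
    rw [hL] at h
    exact h
  have hnormxs : ∑ j, xs j * xs j = ‖xs‖ ^ 2 := by
    rw [← real_inner_self_eq_norm_sq]
    simp only [PiLp.inner_apply, RCLike.inner_apply, conj_trivial]
  have hbsum : ∑ i, b i * us i = -‖xs‖ ^ 2 := by
    have h1 : ∀ i, b i * us i = us i * A.mulVec xs i := by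
      intro i
      by_cases h : A.mulVec xs i = b i
      · rw [h]; ring
      · rw [huscs i h]; ring
    rw [Finset.sum_congr rfl fun i _ => h1 i]
    have h2 : ∀ i, us i * A.mulVec xs i = ∑ j, us i * (A i j * xs j) := by
      intro i; rw [← Finset.mul_sum]; rfl
    rw [Finset.sum_congr rfl fun i _ => h2 i, Finset.sum_comm]
    have h3 : ∀ j, ∑ i, us i * (A i j * xs j) = -(xs j * xs j) := by
      intro j
      have : ∑ i, us i * (A i j * xs j) = (∑ i, us i * A i j) * xs j := by
        rw [Finset.sum_mul]
        exact Finset.sum_congr rfl fun i _ => by ring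
      rw [this, hrows j]
      ring
    rw [Finset.sum_congr rfl fun j _ => h3 j]
    rw [Finset.sum_neg_distrib, hnormxs]
  have hWs : (WithLp.equiv 2 (Fin (n + 1) → ℝ)).symm (Abar.transpose.mulVec us) - θs • ebar
      = -xbar := by
    apply (WithLp.equiv 2 (Fin (n + 1) → ℝ)).injective
    funext j
    have hLj : (WithLp.equiv 2 (Fin (n + 1) → ℝ))
        ((WithLp.equiv 2 (Fin (n + 1) → ℝ)).symm (Abar.transpose.mulVec us) - θs • ebar) j
        = (∑ i, Abar i j * us i) - θs * ebar j := happ0 us θs j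
    have hRj : (WithLp.equiv 2 (Fin (n + 1) → ℝ)) (-xbar) j = -(xbar j) := rfl
    rw [hLj, hRj]
    induction j using Fin.lastCases with
    | last =>
      rw [hebar_last, hxbar_last]
      have : ∑ i, Abar i (Fin.last n) * us i = -(∑ i, b i * us i) := by
        rw [← Finset.sum_neg_distrib]
        exact Finset.sum_congr rfl fun i _ => by rw [hAbar_last]; ring
      rw [this, hbsum, hθs]
      ring
    | cast j =>
      rw [hebar_cast, hxbar_cast]
      have : ∑ i, Abar i j.castSucc * us i = ∑ i, us i * A i j := by
        exact Finset.sum_congr rfl fun i _ => by rw [hAbar_cast]; ring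
      rw [this, hrows j]
      ring
  refine ⟨v, ⟨⟨xs, hfeas, hv⟩, ?_⟩, ⟨⟨us, θs, fun i => hus0 i, ?_⟩, ?_⟩⟩
  · rintro w ⟨x, hx, rfl⟩
    have h1 := hmin x hx
    have h2 : ‖xs‖ ^ 2 ≤ ‖x‖ ^ 2 := pow_le_pow_left₀ (norm_nonneg xs) h1 2
    rw [hv]
    linarith
  · rw [hWs, norm_neg, hnormxbar, hv, hθs]
    ring
  · rintro w ⟨u, θ, hu, rfl⟩
    exact hwd u θ (fun i => hu i)
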